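/- arXiv:cs/0504047 — 2 statements merged into one kernel-verified Lean document; each statement's English description precedes it below -/
import Mathlib

section
/- Let S, T be infinite sequences over a finite alphabet Σ that are both normal. Let 0 < i_1 < i_2 < ... be a sequence of indices such that the function f(j) = i_{j+1} − i_j is nondecreasing and unbounded, and form the interleaved sequence U = S[1..i_1] T[1..i_1] S[i_1+1..i_2] T[i_1+1..i_2] S[i_2+1..i_3] T[i_2+1..i_3] ⋯. Then U is normal over Σ. -/
open Filter

/-- The prefix of length `n` of the infinite sequence `S`. -/
def pre {α : Type*} (S : ℕ → α) (n : ℕ) : List α := List.ofFn fun i : Fin n => S i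

/-- The number of (possibly overlapping) occurrences of `w` as a substring of `x`. -/
def occ {α : Type*} [DecidableEq α] (w x : List α) : ℕ :=
  ((List.range x.length).filter fun i => (x.drop i).take w.length = w).length

/-- A sequence is normal if every finite string `w` occurs with limiting frequency
`|Σ|^(-|w|)`. -/
def IsNormalSeq {α : Type*} [Fintype α] [DecidableEq α] (S : ℕ → α) : Prop :=
  ∀ w : List α, Tendsto (fun n => (occ w (pre S n) : ℝ) / n) atTop
    (nhds (((Fintype.card α : ℝ) ^ w.length)⁻¹))

/-- The finite substring `S[a+1..b]` (0-indexed: characters `S a, ..., S (b-1)`). -/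
def seg {α : Type*} (S : ℕ → α) (a b : ℕ) : List α :=
  (List.range (b - a)).map fun j => S (a + j)

/-- The prefix of the interleaved sequence after `j` double blocks:
`S[1..i₁] T[1..i₁] S[i₁+1..i₂] T[i₁+1..i₂] ⋯`. -/
def interPre {α : Type*} (S T : ℕ → α) (i : ℕ → ℕ) : ℕ → List α
  | 0 => []
  | j + 1 => interPre S T i j ++ seg S (i j) (i (j + 1)) ++ seg T (i j) (i (j + 1))

section occ
variable {α : Type*} [DecidableEq α] (w x y : List α)

lemma occ_eq_countP :
    occ w x = (List.range x.length).countP (fun i => decide ((x.drop i).take w.length = w)) := by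
  rw [occ, List.countP_eq_length_filter]

lemma occ_le_length : occ w x ≤ x.length := by
  rw [occ_eq_countP]
  exact le_trans List.countP_le_length (by simp)

lemma occ_pos_imp {i : ℕ} (h : (x.drop i).take w.length = w) : w.length ≤ x.length - i := by
  have h' : w.length ≤ (x.drop i).length := h ▸ (List.take_prefix _ _).length_le
  simp only [List.length_drop] at h'
  omega

lemma occ_imp_append {i : ℕ} (hi : i ≤ x.length) (h : (x.drop i).take w.length = w) :
    ((x ++ y).drop i).take w.length = w := by
  have hlen := occ_pos_imp w x h
  have h1 : i ≤ x.length := hi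
  have h2 : w.length ≤ (x.drop i).length := by simp only [List.length_drop]; omega
  rw [List.drop_append_of_le_length h1, List.take_append_of_le_length h2, h]

lemma occ_append_ge : occ w x + occ w y ≤ occ w (x ++ y) := by
  rw [occ_eq_countP w x, occ_eq_countP w y, occ_eq_countP w (x ++ y), List.length_append,
    List.range_add, List.countP_append, List.countP_map]
  refine Nat.add_le_add ?_ (le_of_eq (List.countP_congr ?_).symm)
  · refine List.countP_mono_left fun i hmem hi => ?_
    simp only [decide_eq_true_eq] at *
    exact occ_imp_append w x y (le_of_lt (List.mem_range.mp hmem)) hi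
  · intro j _
    simp only [Function.comp, decide_eq_true_eq]
    rw [show x.length + j = x.length + j from rfl, List.drop_length_add_append]

lemma occ_append_le : occ w (x ++ y) ≤ occ w x + occ w y + w.length := by
  rw [occ_eq_countP w x, occ_eq_countP w y, occ_eq_countP w (x ++ y), List.length_append,
    List.range_add, List.countP_append, List.countP_map]
  have hB : List.countP ((fun i => decide (((x ++ y).drop i).take w.length = w)) ∘
      (fun j => x.length + j)) (List.range y.length)
      = List.countP (fun i => decide ((y.drop i).take w.length = w)) (List.range y.length) := by
    refine List.countP_congr fun j _ => ?_
    simp only [Function.comp, decide_eq_true_eq]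
    rw [List.drop_length_add_append]
  rw [hB]
  have hA : List.countP (fun i => decide (((x ++ y).drop i).take w.length = w))
      (List.range x.length)
      ≤ List.countP (fun i => decide ((x.drop i).take w.length = w)) (List.range x.length)
        + w.length := by
    by_cases hl : x.length ≤ w.length
    · calc List.countP _ (List.range x.length) ≤ (List.range x.length).length :=
            List.countP_le_length
        _ ≤ _ := by simp; omega
    · push_neg at hl
      have hsplit : x.length = (x.length - w.length) + w.length := by omega
      nth_rewrite 1 [hsplit]
      rw [List.range_add, List.countP_append]
      refine Nat.add_le_add ?_ ?_
      · refine le_trans (List.countP_mono_left fun i hi hpi => ?_)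
          ((List.range_sublist.mpr (Nat.sub_le x.length w.length)).countP_le)
        simp only [List.mem_range] at hi
        simp only [decide_eq_true_eq] at *
        have hle : w.length ≤ (x.drop i).length := by
          simp only [List.length_drop]; omega
        rw [List.drop_append_of_le_length (by omega), List.take_append_of_le_length hle] at hpi
        exact hpi
      · exact le_trans List.countP_le_length (by simp)
  omega

end occ

section pre
variable {α : Type*} (S : ℕ → α)

lemma pre_eq_map (n : ℕ) : pre S n = (List.range n).map S := by
  apply List.ext_getElem <;> simp [pre]

lemma length_pre (n : ℕ) : (pre S n).length = n := by simp [pre]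

lemma length_seg (a b : ℕ) : (seg S a b).length = b - a := by simp [seg]

lemma pre_add (a c : ℕ) : pre S (a + c) = pre S a ++ seg S a (a + c) := by
  simp only [pre_eq_map, seg, List.range_add, Nat.add_sub_cancel_left, List.map_map,
    List.map_append]
  rfl

lemma pre_append {a b : ℕ} (h : a ≤ b) : pre S b = pre S a ++ seg S a b := by
  have : b = a + (b - a) := by omega
  rw [this, pre_add]

lemma seg_take {a b d : ℕ} (h : d ≤ b - a) : (seg S a b).take d = seg S a (a + d) := by
  rw [seg, seg, Nat.add_sub_cancel_left, ← List.map_take, List.take_range, min_eq_left h]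

lemma pre_take {n m : ℕ} (h : n ≤ m) : (pre S m).take n = pre S n := by
  rw [pre_eq_map, pre_eq_map, ← List.map_take, List.take_range, min_eq_left h]

end pre

theorem splicing_normal {α : Type*} [Fintype α] [DecidableEq α]
    (S T U : ℕ → α) (i : ℕ → ℕ) (hi0 : i 0 = 0) (hmono : StrictMono i)
    (hgap : ∀ j, i (j + 1) - i j ≤ i (j + 2) - i (j + 1))
    (hunb : ∀ M : ℕ, ∃ j, M < i (j + 1) - i j)
    (hS : IsNormalSeq S) (hT : IsNormalSeq T)
    (hU : ∀ j, pre U (2 * i j) = interPre S T i j) :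
    IsNormalSeq U := by
  have hij : ∀ j, i j ≤ i (j + 1) := fun j => (hmono (lt_add_one j)).le
  have gmono : Monotone (fun j => i (j + 1) - i j) := monotone_nat_of_le_succ hgap
  -- the index function J
  set J : ℕ → ℕ := fun n => Nat.findGreatest (fun j => 2 * i j ≤ n) n with hJdef
  have hJ1 : ∀ n, 2 * i (J n) ≤ n := by
    intro n
    exact Nat.findGreatest_spec (P := fun j => 2 * i j ≤ n) (Nat.zero_le n) (show 2 * i 0 ≤ n by omega)
  have hJ2 : ∀ n, n < 2 * i (J n + 1) := by
    intro n
    by_contra hcon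
    push_neg at hcon
    have hle : J n + 1 ≤ n := le_trans hmono.le_apply (by omega)
    exact Nat.findGreatest_is_greatest (lt_add_one _) hle hcon
  have hi_growth : ∀ K : ℕ, ∃ j0, ∀ j, j0 ≤ j → K * j ≤ i j := by
    intro K
    obtain ⟨j1, hj1⟩ := hunb (2 * K)
    have step : ∀ m, i j1 + (2 * K + 1) * m ≤ i (j1 + m) := by
      intro m
      induction m with
      | zero => simp
      | succ m ih =>
        have hg : i (j1 + 1) - i j1 ≤ i (j1 + m + 1) - i (j1 + m) :=
          gmono (Nat.le_add_right j1 m)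
        have hmn := hij (j1 + m)
        have hstep : i (j1 + m) + (2 * K + 1) ≤ i (j1 + m + 1) := by omega
        have he : j1 + (m + 1) = j1 + m + 1 := by omega
        rw [he]
        calc i j1 + (2 * K + 1) * (m + 1) = (i j1 + (2 * K + 1) * m) + (2 * K + 1) := by ring
          _ ≤ i (j1 + m) + (2 * K + 1) := by omega
          _ ≤ i (j1 + m + 1) := hstep
    refine ⟨2 * (j1 + 1), fun j hj => ?_⟩
    have hm : j1 + (j - j1) = j := by omega
    have hst := step (j - j1)
    rw [hm] at hst
    have h3 : K * j ≤ (2 * K + 1) * (j - j1) :=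
      calc K * j ≤ K * (2 * (j - j1)) := Nat.mul_le_mul_left _ (by omega)
        _ = 2 * K * (j - j1) := by ring
        _ ≤ (2 * K + 1) * (j - j1) := Nat.mul_le_mul_right _ (by omega)
    calc K * j ≤ (2 * K + 1) * (j - j1) := h3
      _ ≤ i j1 + (2 * K + 1) * (j - j1) := Nat.le_add_left _ _
      _ ≤ i j := hst
  have hJtend : Tendsto (fun n => (J n : ℝ) / n) atTop (nhds 0) := by
    rw [Metric.tendsto_atTop]
    intro ε hε
    obtain ⟨K, hK⟩ := exists_nat_gt (2 / ε)
    have hK0 : (0 : ℝ) < K := lt_trans (by positivity) hK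
    obtain ⟨j0, hj0⟩ := hi_growth K
    obtain ⟨N1, hN1⟩ := exists_nat_gt (2 * (j0 : ℝ) / ε)
    refine ⟨max N1 1, fun n hn => ?_⟩
    have hn1 : 1 ≤ n := le_trans (le_max_right _ _) hn
    have hnN1 : (N1 : ℝ) ≤ n := Nat.cast_le.mpr (le_trans (le_max_left _ _) hn)
    have hnpos : (0 : ℝ) < n := by exact_mod_cast hn1
    rw [Real.dist_eq, sub_zero, abs_of_nonneg (by positivity)]
    have hJb : (J n : ℝ) ≤ j0 + n / K := by
      rcases le_or_gt (J n) j0 with h | h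
      · have h' : (J n : ℝ) ≤ j0 := Nat.cast_le.mpr h
        have : (0 : ℝ) ≤ n / K := by positivity
        linarith
      · have h5 : K * J n ≤ i (J n) := hj0 _ h.le
        have h6 : i (J n) ≤ n := by have := hJ1 n; omega
        have h7 : (K : ℝ) * J n ≤ n := by exact_mod_cast le_trans h5 h6
        have h8 : (J n : ℝ) ≤ n / K := by rw [le_div_iff₀ hK0]; linarith
        have h9 : (0:ℝ) ≤ j0 := Nat.cast_nonneg _
        linarith
    have hj0n : (j0 : ℝ) / n < ε / 2 := by
      rw [div_lt_iff₀ hnpos]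
      have h8 : 2 * (j0 : ℝ) / ε < n := lt_of_lt_of_le hN1 hnN1
      rw [div_lt_iff₀ hε] at h8
      linarith
    have hKe : (1 : ℝ) / K < ε / 2 := by
      rw [div_lt_iff₀ hK0]
      rw [div_lt_iff₀ hε] at hK
      linarith
    have h10 : (J n : ℝ) / n ≤ ((j0 : ℝ) + n / K) / n := by
      exact (div_le_div_iff_of_pos_right hnpos).mpr hJb
    have h11 : ((j0 : ℝ) + n / K) / n = (j0 : ℝ) / n + 1 / K := by
      rw [add_div, div_div, mul_comm, ← div_div, div_self (ne_of_gt hnpos)]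
    rw [h11] at h10
    linarith
  intro w
  set ℓ := w.length with hl
  set c : ℝ := ((Fintype.card α : ℝ) ^ ℓ)⁻¹ with hc
  have hcard : (1 : ℝ) ≤ (Fintype.card α : ℝ) := by
    have : 0 < Fintype.card α := @Fintype.card_pos α _ ⟨S 0⟩
    exact_mod_cast this
  have hc0 : 0 ≤ c := by positivity
  have hc1 : c ≤ 1 := by
    rw [hc]
    have h1 : (1 : ℝ) ≤ (Fintype.card α : ℝ) ^ ℓ := one_le_pow₀ hcard
    exact inv_le_one_of_one_le₀ h1
  -- uniform linear bounds from normality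
  have key : ∀ V : ℕ → α, Tendsto (fun n => (occ w (pre V n) : ℝ) / n) atTop (nhds c) →
      ∀ ε : ℝ, 0 < ε → ∃ C : ℝ, 0 ≤ C ∧
      ∀ n : ℕ, |(occ w (pre V n) : ℝ) - c * n| ≤ ε * n + C := by
    intro V hV ε hε
    rw [Metric.tendsto_atTop] at hV
    obtain ⟨N, hN⟩ := hV ε hε
    refine ⟨2 * N + 2, by positivity, fun n => ?_⟩
    have hocc : (occ w (pre V n) : ℝ) ≤ n := by
      have := occ_le_length w (pre V n)
      rw [length_pre] at this
      exact_mod_cast this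
    have hocc0 : (0 : ℝ) ≤ (occ w (pre V n) : ℝ) := Nat.cast_nonneg _
    have hn0 : (0 : ℝ) ≤ (n : ℝ) := Nat.cast_nonneg _
    rcases le_or_gt n N with hn | hn
    · have hnN : (n : ℝ) ≤ N := Nat.cast_le.mpr hn
      rw [abs_le]
      constructor <;> nlinarith
    · have hd := hN n hn.le
      have hnpos : (0 : ℝ) < n := by
        have : 0 < n := by omega
        exact_mod_cast this
      rw [Real.dist_eq] at hd
      have e : (occ w (pre V n) : ℝ) / n - c = ((occ w (pre V n) : ℝ) - c * n) / n := by
        field_simp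
      rw [e, abs_div, abs_of_pos hnpos, div_lt_iff₀ hnpos] at hd
      linarith
  -- length of interPre
  have hlen : ∀ j, (interPre S T i j).length = 2 * i j := by
    intro j
    induction j with
    | zero => simp [interPre, hi0]
    | succ j ih =>
      have := hij j
      simp only [interPre, List.length_append, length_seg, ih]
      omega
  -- occurrence counts in interPre
  have hBnd : ∀ j,
      occ w (pre S (i j)) + occ w (pre T (i j)) ≤ occ w (interPre S T i j) + 2 * j * ℓ ∧
      occ w (interPre S T i j) ≤ occ w (pre S (i j)) + occ w (pre T (i j)) + 2 * j * ℓ := by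
    intro j
    induction j with
    | zero => simp [interPre, hi0, pre, occ]
    | succ j ih =>
      have hsS := pre_append S (hij j)
      have hsT := pre_append T (hij j)
      have g1 := occ_append_ge w (pre S (i j)) (seg S (i j) (i (j + 1)))
      have g2 := occ_append_le w (pre S (i j)) (seg S (i j) (i (j + 1)))
      have g3 := occ_append_ge w (pre T (i j)) (seg T (i j) (i (j + 1)))
      have g4 := occ_append_le w (pre T (i j)) (seg T (i j) (i (j + 1)))
      rw [← hsS] at g1 g2
      rw [← hsT] at g3 g4
      have g5 := occ_append_ge w (interPre S T i j ++ seg S (i j) (i (j + 1)))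
        (seg T (i j) (i (j + 1)))
      have g6 := occ_append_le w (interPre S T i j ++ seg S (i j) (i (j + 1)))
        (seg T (i j) (i (j + 1)))
      have g7 := occ_append_ge w (interPre S T i j) (seg S (i j) (i (j + 1)))
      have g8 := occ_append_le w (interPre S T i j) (seg S (i j) (i (j + 1)))
      simp only [interPre]
      constructor <;> [linarith [ih.1]; linarith [ih.2]]
  -- the master decomposition
  have master : ∀ n, ∃ a b, a + b = n ∧
      occ w (pre S a) + occ w (pre T b) ≤ occ w (pre U n) + (2 * J n + 3) * ℓ ∧
      occ w (pre U n) ≤ occ w (pre S a) + occ w (pre T b) + (2 * J n + 3) * ℓ := by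
    intro n
    have h1 : 2 * i (J n) ≤ n := hJ1 n
    have h2 : n < 2 * i (J n + 1) := hJ2 n
    have hijj := hij (J n)
    set j := J n with hjdef
    set d := n - 2 * i j with hddef
    have hpre : pre U n = (interPre S T i (j + 1)).take n := by
      rw [← hU (j + 1), pre_take U h2.le]
    have htake : (interPre S T i (j + 1)).take n
        = interPre S T i j ++ (seg S (i j) (i (j + 1)) ++ seg T (i j) (i (j + 1))).take d := by
      have hn' : n = (interPre S T i j).length + d := by rw [hlen j]; omega
      rw [hn']
      simp only [interPre]
      rw [List.append_assoc, List.take_length_add_append]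
    rcases le_or_gt d (i (j + 1) - i j) with hcase | hcase
    · have hseg : (seg S (i j) (i (j + 1)) ++ seg T (i j) (i (j + 1))).take d
          = seg S (i j) (i j + d) := by
        rw [List.take_append_of_le_length (by rw [length_seg]; exact hcase), seg_take S hcase]
      have hU' : pre U n = interPre S T i j ++ seg S (i j) (i j + d) := by
        rw [hpre, htake, hseg]
      have hB := hBnd j
      have g1 := occ_append_le w (pre S (i j)) (seg S (i j) (i j + d))
      have g2 := occ_append_ge w (pre S (i j)) (seg S (i j) (i j + d))
      rw [← pre_add] at g1 g2
      have g3 := occ_append_ge w (interPre S T i j) (seg S (i j) (i j + d))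
      have g4 := occ_append_le w (interPre S T i j) (seg S (i j) (i j + d))
      rw [← hU'] at g3 g4
      exact ⟨i j + d, i j, by omega, by linarith [hB.1], by linarith [hB.2]⟩
    · have he_le : d - (i (j + 1) - i j) ≤ i (j + 1) - i j := by omega
      have hseg : (seg S (i j) (i (j + 1)) ++ seg T (i j) (i (j + 1))).take d
          = seg S (i j) (i (j + 1)) ++ seg T (i j) (i j + (d - (i (j + 1) - i j))) := by
        rw [List.take_append,
          List.take_of_length_le (by rw [length_seg]; omega), length_seg, seg_take T he_le]
      have hU' : pre U n = interPre S T i j ++ seg S (i j) (i (j + 1))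
          ++ seg T (i j) (i j + (d - (i (j + 1) - i j))) := by
        rw [hpre, htake, hseg, ← List.append_assoc]
      have hB := hBnd j
      have g1 := occ_append_le w (pre S (i j)) (seg S (i j) (i (j + 1)))
      have g2 := occ_append_ge w (pre S (i j)) (seg S (i j) (i (j + 1)))
      rw [← pre_append S hijj] at g1 g2
      have g3 := occ_append_le w (pre T (i j)) (seg T (i j) (i j + (d - (i (j + 1) - i j))))
      have g4 := occ_append_ge w (pre T (i j)) (seg T (i j) (i j + (d - (i (j + 1) - i j))))
      rw [← pre_add] at g3 g4
      have g5 := occ_append_ge w (interPre S T i j ++ seg S (i j) (i (j + 1)))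
        (seg T (i j) (i j + (d - (i (j + 1) - i j))))
      have g6 := occ_append_le w (interPre S T i j ++ seg S (i j) (i (j + 1)))
        (seg T (i j) (i j + (d - (i (j + 1) - i j))))
      rw [← hU'] at g5 g6
      have g7 := occ_append_ge w (interPre S T i j) (seg S (i j) (i (j + 1)))
      have g8 := occ_append_le w (interPre S T i j) (seg S (i j) (i (j + 1)))
      refine ⟨i (j + 1), i j + (d - (i (j + 1) - i j)), by omega, ?_, ?_⟩
      · linarith [hB.1]
      · linarith [hB.2]
  -- tendsto of the error term
  have hJtend2 : Tendsto (fun n => (((2 * J n + 3) * ℓ : ℕ) : ℝ) / n) atTop (nhds 0) := by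
    have t1 := hJtend.const_mul (2 * (ℓ : ℝ))
    have t2 := tendsto_one_div_atTop_nhds_zero_nat.const_mul (3 * (ℓ : ℝ))
    have t3 := t1.add t2
    have t4 : ∀ n : ℕ, 2 * (ℓ : ℝ) * ((J n : ℝ) / n) + 3 * (ℓ : ℝ) * (1 / n)
        = (((2 * J n + 3) * ℓ : ℕ) : ℝ) / n := by
      intro n
      push_cast
      ring
    have t5 := t3.congr t4
    simpa using t5
  rw [Metric.tendsto_atTop]
  intro ε hε
  obtain ⟨CS, hCS0, hCS⟩ := key S (hS w) (ε / 4) (by positivity)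
  obtain ⟨CT, hCT0, hCT⟩ := key T (hT w) (ε / 4) (by positivity)
  obtain ⟨N1, hN1⟩ := Metric.tendsto_atTop.mp hJtend2 (ε / 4) (by positivity)
  obtain ⟨N2, hN2⟩ := exists_nat_gt ((CS + CT) / (ε / 4))
  refine ⟨max (max N1 N2) 1, fun n hn => ?_⟩
  have hn1 : 1 ≤ n := le_trans (le_max_right _ _) hn
  have hnN1 : N1 ≤ n := le_trans (le_trans (le_max_left _ _) (le_max_left _ _)) hn
  have hnN2 : (N2 : ℝ) ≤ n :=
    Nat.cast_le.mpr (le_trans (le_trans (le_max_right _ _) (le_max_left _ _)) hn)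
  have hnpos : (0 : ℝ) < n := by exact_mod_cast hn1
  obtain ⟨a, b, hab, hlow, hhigh⟩ := master n
  have hA := abs_le.mp (hCS a)
  have hB := abs_le.mp (hCT b)
  have habr : (a : ℝ) + b = n := by exact_mod_cast hab
  have hE : (((2 * J n + 3) * ℓ : ℕ) : ℝ) < ε / 4 * n := by
    have h' := hN1 n hnN1
    rw [Real.dist_eq, sub_zero, abs_of_nonneg (by positivity), div_lt_iff₀ hnpos] at h'
    linarith
  have hCb : CS + CT < ε / 4 * n := by
    have h' : (CS + CT) / (ε / 4) < n := lt_of_lt_of_le hN2 hnN2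
    rw [div_lt_iff₀ (by positivity)] at h'
    linarith
  have hlow' : (occ w (pre S a) : ℝ) + occ w (pre T b)
      ≤ occ w (pre U n) + (((2 * J n + 3) * ℓ : ℕ) : ℝ) := by exact_mod_cast hlow
  have hhigh' : (occ w (pre U n) : ℝ)
      ≤ occ w (pre S a) + occ w (pre T b) + (((2 * J n + 3) * ℓ : ℕ) : ℝ) := by
    exact_mod_cast hhigh
  have e : (occ w (pre U n) : ℝ) / n - c = ((occ w (pre U n) : ℝ) - c * n) / n := by
    field_simp
  rw [Real.dist_eq, e, abs_div, abs_of_pos hnpos, div_lt_iff₀ hnpos]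
  have hca : c * (n : ℝ) = c * a + c * b := by rw [← habr]; ring
  have hεn : (0 : ℝ) < ε * n := mul_pos hε hnpos
  have habe : ε / 4 * a + ε / 4 * b = ε / 4 * n := by rw [← habr]; ring
  rw [abs_lt]
  constructor
  · linarith [hA.1, hB.1]
  · linarith [hA.2, hB.2]
end

section
/- Let G be a finite-state gambler over alphabet Σ that s-succeeds on a sequence S ∈ Σ^∞, where Σ ⊆ Σ'. Then there is a finite-state gambler G' over alphabet Σ' that t-succeeds on S (viewed as a sequence over Σ'), where t = s · (log|Σ|)/(log|Σ'|). Consequently, dim_FS^{(Σ')}(S) ≤ (log|Σ|/log|Σ'|) · dim_FS^{(Σ)}(S). -/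
open Filter

/-- A finite-state gambler over the alphabet `A`: finitely many states, a
transition function, and a rational betting function giving a probability
measure on `A` at each state. -/
structure FSG (A : Type) [Fintype A] where
  Q : Type
  fin : Finite Q
  q0 : Q
  δ : Q → A → Q
  β : Q → A → ℚ
  β_nonneg : ∀ q a, 0 ≤ β q a
  β_sum : ∀ q, ∑ a : A, β q a = 1

variable {A : Type} [Fintype A]

/-- The state reached after reading the string `w`. -/
def FSG.run (G : FSG A) (w : List A) : G.Q := w.foldl G.δ G.q0

/-- The martingale of the finite-state gambler `G`:
`d_G(λ) = 1` and `d_G(wa) = d_G(w) · β(δ(w))(a) · |A|`. -/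
def FSG.mart (G : FSG A) (w : List A) : ℝ :=
  ∏ i : Fin w.length, ((G.β (G.run (w.take i)) (w.get i) : ℝ) * (Fintype.card A : ℝ))

/-- The `s`-gale of `G`: `d_G^(s)(w) = |A|^((s-1)|w|) · d_G(w)`. -/
noncomputable def FSG.sgale (G : FSG A) (s : ℝ) (w : List A) : ℝ :=
  (Fintype.card A : ℝ) ^ ((s - 1) * (w.length : ℝ)) * G.mart w

/-- `G` `s`-succeeds on `S`: the `s`-gale is unbounded along prefixes of `S`
(equivalently, its limsup is `∞`). -/
def FSG.succeeds (G : FSG A) (s : ℝ) (S : ℕ → A) : Prop :=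
  ∀ c : ℝ, ∃ n : ℕ, c < G.sgale s (pre S n)

/-- The finite-state dimension of `S` over the alphabet `A`. -/
noncomputable def dimFS (S : ℕ → A) : ℝ :=
  sInf {s : ℝ | 0 ≤ s ∧ ∃ G : FSG A, G.succeeds s S}

section Aux

variable {A' : Type} [Fintype A']

/-- The enlargement of a gambler to a bigger alphabet. -/
@[reducible] noncomputable def FSG.enlarge [Nonempty A] [DecidableEq A'] (ι : A → A') (G : FSG A) : FSG A' where
  Q := G.Q
  fin := G.fin
  q0 := G.q0
  δ q a' := G.δ q (Function.invFun ι a')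
  β q a' := ∑ a : A, if ι a = a' then G.β q a else 0
  β_nonneg q a' := Finset.sum_nonneg fun a _ => by
    split
    · exact G.β_nonneg q a
    · exact le_refl 0
  β_sum q := by
    rw [Finset.sum_comm]
    simp [G.β_sum]

variable [Nonempty A] [DecidableEq A'] {ι : A → A'}

lemma FSG.enlarge_beta (hι : Function.Injective ι) (G : FSG A) (q : G.Q) (a : A) :
    (G.enlarge ι).β q (ι a) = G.β q a := by
  classical
  show (∑ x : A, if ι x = ι a then G.β q x else 0) = G.β q a
  simp [hι.eq_iff]

lemma FSG.enlarge_run (hι : Function.Injective ι) (G : FSG A) (w : List A) :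
    (G.enlarge ι).run (w.map ι) = G.run w := by
  have key : ∀ q : G.Q, (w.map ι).foldl (G.enlarge ι).δ q = w.foldl G.δ q := by
    induction w with
    | nil => intro q; rfl
    | cons a w ih =>
      intro q
      simp only [List.map_cons, List.foldl_cons, ih]
      congr 1
      show G.δ q (Function.invFun ι (ι a)) = G.δ q a
      rw [Function.leftInverse_invFun hι a]
  exact key G.q0

omit [Nonempty A] [DecidableEq A'] [Fintype A'] in
lemma FSG.mart_nonneg (G : FSG A) (w : List A) : 0 ≤ G.mart w :=
  Finset.prod_nonneg fun i _ => mul_nonneg (by exact_mod_cast G.β_nonneg _ _) (by positivity)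

omit [Nonempty A] [DecidableEq A'] [Fintype A'] in
lemma FSG.mart_eq (G : FSG A) (w : List A) :
    G.mart w = (∏ i : Fin w.length, (G.β (G.run (w.take i)) (w.get i) : ℝ)) *
      (Fintype.card A : ℝ) ^ w.length := by
  rw [FSG.mart, Finset.prod_mul_distrib, Finset.prod_const, Finset.card_univ, Fintype.card_fin]

lemma FSG.enlarge_mart (hι : Function.Injective ι) (G : FSG A) (w : List A) :
    (G.enlarge ι).mart (w.map ι) =
      (∏ i : Fin w.length, (G.β (G.run (w.take i)) (w.get i) : ℝ)) *
        (Fintype.card A' : ℝ) ^ w.length := by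
  have hlen : (w.map ι).length = w.length := by simp
  rw [FSG.mart_eq]
  congr 1
  · apply Fintype.prod_equiv (finCongr hlen)
    intro i
    have h1 : (w.map ι).take i = (w.take i).map ι := List.map_take.symm
    have h2 : (w.map ι).get i = ι (w.get (finCongr hlen i)) := by
      simp [List.getElem_map]
    rw [h1, h2, FSG.enlarge_run hι, FSG.enlarge_beta hι]
    norm_num
  · rw [hlen]

lemma FSG.enlarge_sgale (hι : Function.Injective ι) (hA : 2 ≤ Fintype.card A)
    (hA' : 2 ≤ Fintype.card A') (G : FSG A) {s t : ℝ}
    (hst : t * Real.log (Fintype.card A') = s * Real.log (Fintype.card A)) (w : List A) :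
    (G.enlarge ι).sgale t (w.map ι) = G.sgale s w := by
  have hpa : (0:ℝ) < (Fintype.card A : ℝ) := by
    have : (1:ℝ) < (Fintype.card A : ℝ) := by exact_mod_cast hA
    linarith
  have hpa' : (0:ℝ) < (Fintype.card A' : ℝ) := by
    have : (1:ℝ) < (Fintype.card A' : ℝ) := by exact_mod_cast hA'
    linarith
  set n := w.length with hn
  have hmain : (Fintype.card A' : ℝ) ^ (t * (n:ℝ)) = (Fintype.card A : ℝ) ^ (s * (n:ℝ)) := by
    rw [Real.rpow_def_of_pos hpa', Real.rpow_def_of_pos hpa]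
    congr 1
    calc Real.log (Fintype.card A') * (t * (n:ℝ)) = (t * Real.log (Fintype.card A')) * n := by
          ring
      _ = (s * Real.log (Fintype.card A)) * n := by rw [hst]
      _ = Real.log (Fintype.card A) * (s * (n:ℝ)) := by ring
  have e1 : (Fintype.card A' : ℝ) ^ ((t-1) * (n:ℝ)) * (Fintype.card A' : ℝ) ^ (n:ℕ)
      = (Fintype.card A' : ℝ) ^ (t * (n:ℝ)) := by
    rw [← Real.rpow_natCast (Fintype.card A' : ℝ) n, ← Real.rpow_add hpa']
    congr 1
    ring
  have e2 : (Fintype.card A : ℝ) ^ ((s-1) * (n:ℝ)) * (Fintype.card A : ℝ) ^ (n:ℕ)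
      = (Fintype.card A : ℝ) ^ (s * (n:ℝ)) := by
    rw [← Real.rpow_natCast (Fintype.card A : ℝ) n, ← Real.rpow_add hpa]
    congr 1
    ring
  rw [FSG.sgale, FSG.sgale, FSG.enlarge_mart hι, FSG.mart_eq, List.length_map]
  set P : ℝ := ∏ i : Fin w.length, (G.β (G.run (w.take i)) (w.get i) : ℝ) with hP
  calc (Fintype.card A' : ℝ) ^ ((t-1) * (n:ℝ)) * (P * (Fintype.card A' : ℝ) ^ (n:ℕ))
      = ((Fintype.card A' : ℝ) ^ ((t-1) * (n:ℝ)) * (Fintype.card A' : ℝ) ^ (n:ℕ)) * P := by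
        ring
    _ = (Fintype.card A' : ℝ) ^ (t * (n:ℝ)) * P := by rw [e1]
    _ = (Fintype.card A : ℝ) ^ (s * (n:ℝ)) * P := by rw [hmain]
    _ = ((Fintype.card A : ℝ) ^ ((s-1) * (n:ℝ)) * (Fintype.card A : ℝ) ^ (n:ℕ)) * P := by
        rw [e2]
    _ = (Fintype.card A : ℝ) ^ ((s-1) * (n:ℝ)) * (P * (Fintype.card A : ℝ) ^ (n:ℕ)) := by
        ring

omit [Fintype A] [Nonempty A] [DecidableEq A'] [Fintype A'] in
lemma pre_map (ι : A → A') (S : ℕ → A) (n : ℕ) :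
    pre (ι ∘ S) n = (pre S n).map ι := by
  simp [pre, List.map_ofFn]
  rfl

omit [Nonempty A] [DecidableEq A'] [Fintype A'] in
lemma FSG.succeeds_mono (hA : 2 ≤ Fintype.card A) (G : FSG A) {s s' : ℝ} (hss : s ≤ s')
    {S : ℕ → A} (h : G.succeeds s S) : G.succeeds s' S := by
  intro c
  obtain ⟨n, hn⟩ := h c
  refine ⟨n, lt_of_lt_of_le hn ?_⟩
  unfold FSG.sgale
  apply mul_le_mul_of_nonneg_right _ (G.mart_nonneg _)
  apply Real.rpow_le_rpow_of_exponent_le (by exact_mod_cast one_le_two.trans hA)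
  apply mul_le_mul_of_nonneg_right (by linarith) (Nat.cast_nonneg _)

lemma FSG.enlarge_succeeds (hι : Function.Injective ι) (hA : 2 ≤ Fintype.card A)
    (hA' : 2 ≤ Fintype.card A') (G : FSG A) {s : ℝ} {S : ℕ → A} (h : G.succeeds s S) :
    (G.enlarge ι).succeeds (s * Real.log (Fintype.card A) / Real.log (Fintype.card A'))
      (ι ∘ S) := by
  have hla' : Real.log (Fintype.card A') ≠ 0 := by
    have : (1:ℝ) < (Fintype.card A' : ℝ) := by exact_mod_cast hA'
    exact ne_of_gt (Real.log_pos this)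
  have hst : (s * Real.log (Fintype.card A) / Real.log (Fintype.card A')) *
      Real.log (Fintype.card A') = s * Real.log (Fintype.card A) :=
    div_mul_cancel₀ _ hla'
  intro c
  obtain ⟨n, hn⟩ := h c
  refine ⟨n, ?_⟩
  rw [pre_map, FSG.enlarge_sgale hι hA hA' G hst]
  exact hn

end Aux

theorem fsg_alphabet_enlargement {A A' : Type} [Fintype A] [Fintype A']
    (hA : 2 ≤ Fintype.card A) (ι : A → A') (hι : Function.Injective ι)
    (S : ℕ → A) (s : ℝ) (G : FSG A) (h : G.succeeds s S) :
    (∃ G' : FSG A',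
        G'.succeeds (s * Real.log (Fintype.card A) / Real.log (Fintype.card A')) (ι ∘ S)) ∧
      dimFS (ι ∘ S) ≤ Real.log (Fintype.card A) / Real.log (Fintype.card A') * dimFS S := by
  haveI : Nonempty A := Fintype.card_pos_iff.mp (by omega)
  letI : DecidableEq A' := Classical.decEq A'
  have hA' : 2 ≤ Fintype.card A' := hA.trans (Fintype.card_le_of_injective ι hι)
  have hla : 0 < Real.log (Fintype.card A) := Real.log_pos (by exact_mod_cast hA)
  have hla' : 0 < Real.log (Fintype.card A') := Real.log_pos (by exact_mod_cast hA')
  set r : ℝ := Real.log (Fintype.card A) / Real.log (Fintype.card A') with hr_def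
  have hr : 0 < r := div_pos hla hla'
  constructor
  · exact ⟨G.enlarge ι, FSG.enlarge_succeeds hι hA hA' G h⟩
  · set T : Set ℝ := {u : ℝ | 0 ≤ u ∧ ∃ G : FSG A, G.succeeds u S} with hT
    set T' : Set ℝ := {u : ℝ | 0 ≤ u ∧ ∃ G' : FSG A', G'.succeeds u (ι ∘ S)} with hT'
    have hTne : T.Nonempty :=
      ⟨max s 0, le_max_right _ _, G, FSG.succeeds_mono hA G (le_max_left _ _) h⟩
    have hT'bdd : BddBelow T' := ⟨0, fun t ht => ht.1⟩
    have key : ∀ u ∈ T, sInf T' ≤ r * u := by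
      rintro u ⟨hu0, Gu, hGu⟩
      have h' : (Gu.enlarge ι).succeeds (u * Real.log (Fintype.card A) /
          Real.log (Fintype.card A')) (ι ∘ S) := FSG.enlarge_succeeds hι hA hA' Gu hGu
      have heq : u * Real.log (Fintype.card A) / Real.log (Fintype.card A') = r * u := by
        rw [hr_def]; ring
      have hmem : r * u ∈ T' :=
        ⟨mul_nonneg hr.le hu0, Gu.enlarge ι, heq ▸ h'⟩
      exact csInf_le hT'bdd hmem
    have step : sInf T' / r ≤ sInf T := by
      apply le_csInf hTne
      intro u hu
      rw [div_le_iff₀ hr]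
      calc sInf T' ≤ r * u := key u hu
        _ = u * r := mul_comm _ _
    have : sInf T' ≤ sInf T * r := (div_le_iff₀ hr).mp step
    calc dimFS (ι ∘ S) = sInf T' := rfl
      _ ≤ sInf T * r := this
      _ = r * dimFS S := mul_comm _ _
end
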